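/- Let B = B(0,1) be the open unit ball in ℝⁿ and a = (0,…,0,−α) with 0 ≤ α < 1. Then the Lebesgue measure of the polar of B − a satisfies |(B − a)°| = (1 − α²)^{−(n+1)/2} · |B(0,1)|. Equivalently, writing δ = 1 − α = dist(a, ∂B), |(B − a)°| = |B(0,1)| / [δ(2 − δ)]^{(n+1)/2}. -/

import Mathlib

open scoped RealInnerProductSpace
open MeasureTheory

/-- The polar of a set `S ⊆ ℝⁿ`. -/
def realPolar {n : ℕ} (S : Set (EuclideanSpace ℝ (Fin n))) :
    Set (EuclideanSpace ℝ (Fin n)) :=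
  {y | ∀ x ∈ S, ⟪x, y⟫ ≤ 1}

lemma aux_iff_stmt9 (α S t : ℝ) (hα0 : 0 ≤ α) (hα1 : α < 1) (hS0 : 0 ≤ S) (hSt : t ^ 2 ≤ S) :
    Real.sqrt S + α * t ≤ 1 ↔
      (1 - α ^ 2) * (S - t ^ 2) + ((1 - α ^ 2) * t + α) ^ 2 ≤ 1 := by
  constructor
  · intro h
    have h1 : Real.sqrt S ≤ 1 - α * t := by linarith
    have h2 : S ≤ (1 - α * t) ^ 2 := by
      nlinarith [Real.sq_sqrt hS0, Real.sqrt_nonneg S]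
    nlinarith [mul_le_mul_of_nonneg_left h2 (by nlinarith : (0:ℝ) ≤ 1 - α ^ 2)]
  · intro h
    have h2 : S ≤ (1 - α * t) ^ 2 := by
      by_contra hc
      push_neg at hc
      have := mul_pos (by nlinarith : (0:ℝ) < 1 - α ^ 2) (sub_pos.mpr hc)
      nlinarith
    have h3 : 0 ≤ 1 - α * t := by
      by_contra hc
      push_neg at hc
      have ht0 : 0 < t := by nlinarith
      nlinarith [mul_pos (mul_pos ht0 (show (0:ℝ) < 1 - α by linarith)) ht0]
    have h4 : Real.sqrt S ≤ 1 - α * t := by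
      calc Real.sqrt S ≤ Real.sqrt ((1 - α * t) ^ 2) := Real.sqrt_le_sqrt h2
        _ = 1 - α * t := by rw [Real.sqrt_sq h3]
    linarith

lemma aux_vol_stmt9 {m : ℕ} (α : ℝ) (hα0 : 0 ≤ α) (hα1 : α < 1) :
    volume {y : EuclideanSpace ℝ (Fin (m+1)) | ‖y‖ + α * y (Fin.last m) ≤ 1}
      = ENNReal.ofReal ((1 - α ^ 2) ^ (-(((m : ℝ) + 2) / 2)))
        * volume (Metric.ball (0 : EuclideanSpace ℝ (Fin (m+1))) 1) := by
  have hβ : (0 : ℝ) < 1 - α ^ 2 := by nlinarith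
  set d : Fin (m+1) → ℝ :=
    fun i => if i = Fin.last m then 1 - α ^ 2 else Real.sqrt (1 - α ^ 2) with hd
  set v : Fin (m+1) → ℝ := fun i => if i = Fin.last m then α else 0 with hv
  set A0 : (Fin (m+1) → ℝ) →ₗ[ℝ] (Fin (m+1) → ℝ) := Matrix.toLin' (Matrix.diagonal d) with hA0
  set K' : Set (Fin (m+1) → ℝ) :=
    {z | Real.sqrt (∑ i, z i ^ 2) + α * z (Fin.last m) ≤ 1} with hK'
  set C : Set (Fin (m+1) → ℝ) := {z | ∑ i, z i ^ 2 ≤ 1} with hC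
  have e := EuclideanSpace.volume_preserving_symm_measurableEquiv_toLp (Fin (m+1))
  have hA0app : ∀ z i, A0 z i = d i * z i := by
    intro z i
    simp [hA0, Matrix.toLin'_apply, Matrix.mulVec_diagonal]
  have hsum : ∀ z : Fin (m+1) → ℝ,
      (∑ i, (A0 z + v) i ^ 2)
        = (1 - α ^ 2) * ((∑ i, z i ^ 2) - z (Fin.last m) ^ 2)
          + ((1 - α ^ 2) * z (Fin.last m) + α) ^ 2 := by
    intro z
    have h1 : (∑ i, (A0 z + v) i ^ 2)
        = (∑ i : Fin m, (A0 z + v) i.castSucc ^ 2) + (A0 z + v) (Fin.last m) ^ 2 :=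
      Fin.sum_univ_castSucc _
    have h2 : (∑ i, z i ^ 2)
        = (∑ i : Fin m, z i.castSucc ^ 2) + z (Fin.last m) ^ 2 :=
      Fin.sum_univ_castSucc _
    have hne : ∀ i : Fin m, i.castSucc ≠ Fin.last m := fun i => (Fin.castSucc_lt_last i).ne
    have h3 : ∀ i : Fin m, (A0 z + v) i.castSucc ^ 2 = (1 - α ^ 2) * z i.castSucc ^ 2 := by
      intro i
      have : (A0 z + v) i.castSucc = Real.sqrt (1 - α ^ 2) * z i.castSucc := by
        simp [hA0app, hd, hv, hne i]
      rw [this, mul_pow, Real.sq_sqrt hβ.le]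
    have h4 : (A0 z + v) (Fin.last m) = (1 - α ^ 2) * z (Fin.last m) + α := by
      simp [hA0app, hd, hv]
    have h5 : (∑ i : Fin m, z i.castSucc ^ 2) = (∑ i, z i ^ 2) - z (Fin.last m) ^ 2 := by
      rw [h2]; ring
    rw [h1, h4, Finset.sum_congr rfl (fun i _ => h3 i), ← Finset.mul_sum, h5]
  have hK'eq : K' = (fun z => A0 z + v) ⁻¹' C := by
    ext z
    simp only [hK', hC, Set.mem_setOf_eq, Set.mem_preimage]
    rw [hsum z]
    exact aux_iff_stmt9 α _ _ hα0 hα1 (Finset.sum_nonneg fun i _ => sq_nonneg _)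
      (Finset.single_le_sum (f := fun i => z i ^ 2) (fun i _ => sq_nonneg _)
        (Finset.mem_univ _))
  have hdet : LinearMap.det A0 = Real.sqrt (1 - α ^ 2) ^ m * (1 - α ^ 2) := by
    rw [hA0, LinearMap.det_toLin', Matrix.det_diagonal, Fin.prod_univ_castSucc]
    have hne : ∀ i : Fin m, i.castSucc ≠ Fin.last m := fun i => (Fin.castSucc_lt_last i).ne
    simp [hd, hne]
  have hdetpos : 0 < LinearMap.det A0 := by
    rw [hdet]; positivity
  have hrpow : (1 - α ^ 2) ^ (((m : ℝ) + 2) / 2) = Real.sqrt (1 - α ^ 2) ^ m * (1 - α ^ 2) := by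
    rw [show ((m : ℝ) + 2) / 2 = (m : ℝ) * (1/2) + 1 by ring, Real.rpow_add hβ,
      Real.rpow_one, Real.sqrt_eq_rpow, ← Real.rpow_natCast ((1 - α ^ 2) ^ ((1:ℝ)/2)) m,
      ← Real.rpow_mul hβ.le]
    ring_nf
  have hCmeas : MeasurableSet C := by
    apply measurableSet_le _ measurable_const
    exact Finset.measurable_sum _ fun i _ => ((measurable_pi_apply i).pow_const 2)
  have hK'meas : MeasurableSet K' := by
    apply measurableSet_le _ measurable_const
    apply Measurable.add
    · exact (Finset.measurable_sum _ fun i _ =>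
        ((measurable_pi_apply i).pow_const 2)).sqrt
    · exact Measurable.const_mul
        (show Measurable fun z : Fin (m+1) → ℝ => z (Fin.last m) from measurable_pi_apply _) α
  have hKpre : ((MeasurableEquiv.toLp 2 (Fin (m+1) → ℝ)).symm) ⁻¹' K'
      = {y : EuclideanSpace ℝ (Fin (m+1)) | ‖y‖ + α * y (Fin.last m) ≤ 1} := by
    ext y
    simp only [Set.mem_preimage, hK', Set.mem_setOf_eq, EuclideanSpace.norm_eq]
    simp [MeasurableEquiv.toLp_symm_apply, Real.norm_eq_abs, sq_abs]
  have hCpre : ((MeasurableEquiv.toLp 2 (Fin (m+1) → ℝ)).symm) ⁻¹' C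
      = Metric.closedBall (0 : EuclideanSpace ℝ (Fin (m+1))) 1 := by
    ext y
    simp only [Set.mem_preimage, hC, Set.mem_setOf_eq, Metric.mem_closedBall,
      dist_zero_right, EuclideanSpace.norm_eq]
    simp only [MeasurableEquiv.toLp_symm_apply, MeasurableEquiv.coe_mk, Equiv.coe_fn_mk,
      Real.norm_eq_abs, sq_abs]
    have hS0 : (0:ℝ) ≤ ∑ i, y i ^ 2 := Finset.sum_nonneg fun i _ => sq_nonneg _
    constructor
    · intro h
      have h2 := Real.sqrt_le_sqrt h
      simpa using h2
    · intro h
      nlinarith [Real.sq_sqrt hS0, Real.sqrt_nonneg (∑ i, y i ^ 2)]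
  have step1 : volume {y : EuclideanSpace ℝ (Fin (m+1)) | ‖y‖ + α * y (Fin.last m) ≤ 1}
      = volume K' := by
    rw [← hKpre]
    exact e.measure_preimage hK'meas.nullMeasurableSet
  have step2 : volume ((fun z : Fin (m+1) → ℝ => z + v) ⁻¹' C) = volume C :=
    measure_preimage_add_right volume v C
  have step3 : volume K'
      = ENNReal.ofReal |(LinearMap.det A0)⁻¹| * volume C := by
    rw [hK'eq, show (fun z => A0 z + v) ⁻¹' C = A0 ⁻¹' ((fun z : Fin (m+1) → ℝ => z + v) ⁻¹' C)
      from rfl, Measure.addHaar_preimage_linearMap volume hdetpos.ne' _, step2]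
  have step4 : volume C = volume (Metric.ball (0 : EuclideanSpace ℝ (Fin (m+1))) 1) := by
    rw [← e.measure_preimage hCmeas.nullMeasurableSet, hCpre,
      Measure.addHaar_closedBall_eq_addHaar_ball]
  rw [step1, step3, step4]
  congr 1
  rw [abs_of_pos (inv_pos.mpr hdetpos), hdet, Real.rpow_neg hβ.le, hrpow]

lemma aux_sup_stmt9 {n : ℕ} (y : EuclideanSpace ℝ (Fin n)) (c : ℝ)
    (h : ∀ x : EuclideanSpace ℝ (Fin n), ‖x‖ < 1 → ⟪x, y⟫ ≤ c) : ‖y‖ ≤ c := by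
  have hc0 : 0 ≤ c := by simpa using h 0 (by simp)
  by_contra hcy
  push_neg at hcy
  have hy0 : 0 < ‖y‖ := lt_of_le_of_lt hc0 hcy
  set s : ℝ := (c + ‖y‖) / (2 * ‖y‖ ^ 2) with hs
  have hs0 : 0 ≤ s := by positivity
  have hxnorm : ‖s • y‖ < 1 := by
    rw [norm_smul, Real.norm_eq_abs, abs_of_nonneg hs0, hs, div_mul_eq_mul_div,
      div_lt_one (by positivity)]
    nlinarith
  have h2 := h (s • y) hxnorm
  rw [real_inner_smul_left, real_inner_self_eq_norm_sq, hs] at h2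
  rw [div_mul_eq_mul_div, div_le_iff₀ (by positivity)] at h2
  nlinarith [mul_lt_mul_of_pos_right hcy (by positivity : (0:ℝ) < ‖y‖^2)]

lemma aux_polar_stmt9 {m : ℕ} (α : ℝ) (a : EuclideanSpace ℝ (Fin (m + 1)))
    (haof : a = (-α) • EuclideanSpace.single (Fin.last m) (1 : ℝ)) :
    realPolar ((fun x => x - a) ''
        (Metric.ball (0 : EuclideanSpace ℝ (Fin (m + 1))) 1))
      = {y : EuclideanSpace ℝ (Fin (m+1)) | ‖y‖ + α * y (Fin.last m) ≤ 1} := by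
  ext y
  simp only [realPolar, Set.mem_setOf_eq, Set.forall_mem_image, Metric.mem_ball,
    dist_zero_right]
  have hay : ⟪a, y⟫ = -(α * y (Fin.last m)) := by
    rw [haof, real_inner_smul_left, EuclideanSpace.inner_single_left]
    simp
  have key : ∀ x : EuclideanSpace ℝ (Fin (m+1)),
      ⟪x - a, y⟫ = ⟪x, y⟫ + α * y (Fin.last m) := by
    intro x
    rw [inner_sub_left, hay]
    ring
  constructor
  · intro h
    have h2 : ‖y‖ ≤ 1 - α * y (Fin.last m) := by
      apply aux_sup_stmt9
      intro x hx
      have := h hx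
      rw [key x] at this
      linarith
    linarith
  · intro h x hx
    rw [key x]
    have h1 : ⟪x, y⟫ ≤ ‖y‖ := by
      refine le_trans (real_inner_le_norm x y) ?_
      nlinarith [norm_nonneg y, norm_nonneg x]
    linarith

/-- For the open unit ball `B ⊆ ℝⁿ` (here `n = m+1`) and
`a = -α eₙ`, `0 ≤ α < 1`:  `|(B-a)°| = (1-α²)^{-(n+1)/2} |B|`; equivalently,
with `δ = 1 - α`, `|(B-a)°| = |B| / (δ(2-δ))^{(n+1)/2}`. -/
theorem stmt9 {m : ℕ} (α : ℝ) (hα0 : 0 ≤ α) (hα1 : α < 1)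
    (a : EuclideanSpace ℝ (Fin (m + 1)))
    (haof : a = (-α) • EuclideanSpace.single (Fin.last m) (1 : ℝ))
    (B : Set (EuclideanSpace ℝ (Fin (m + 1))))
    (hB : B = Metric.ball (0 : EuclideanSpace ℝ (Fin (m + 1))) 1) :
    volume (realPolar ((fun x => x - a) '' B))
        = ENNReal.ofReal ((1 - α ^ 2) ^ (-(((m : ℝ) + 2) / 2))) * volume B ∧
      volume (realPolar ((fun x => x - a) '' B))
        = volume B / ENNReal.ofReal (((1 - α) * (2 - (1 - α))) ^ (((m : ℝ) + 2) / 2)) := by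
  have hβ : (0 : ℝ) < 1 - α ^ 2 := by nlinarith
  have h1 : volume (realPolar ((fun x => x - a) '' B))
      = ENNReal.ofReal ((1 - α ^ 2) ^ (-(((m : ℝ) + 2) / 2))) * volume B := by
    rw [hB, aux_polar_stmt9 α a haof]
    exact aux_vol_stmt9 α hα0 hα1
  refine ⟨h1, ?_⟩
  rw [h1]
  rw [show (1 - α) * (2 - (1 - α)) = 1 - α ^ 2 by ring]
  rw [Real.rpow_neg hβ.le, ENNReal.ofReal_inv_of_pos (Real.rpow_pos_of_pos hβ _),
    ENNReal.div_eq_inv_mul]
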